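/- arXiv:1110.4722 — 2 statements merged into one kernel-verified Lean document; each statement's English description precedes it below -/
import Mathlib

section
/- Let G be a finite group, R a commutative ring, and Φ a conjugation functor on G such that Φ(A) is a group for every subgroup A of G and every structure map is a group homomorphism. Then the R-linear map on the generalised Burnside ring P_R(G) determined on generators by ⟨a, A⟩ ↦ ⟨a⁻¹, A⟩ is well defined and is an involution of P_R(G): an R-linear anti-automorphism of the R-algebra P_R(G) whose square is the identity. -/
/-- The conjugate subgroup `g⁻¹ A g = {x | g * x * g⁻¹ ∈ A}`. -/
def conjSub {G : Type} [Group G] (g : G) (A : Subgroup G) : Subgroup G where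
  carrier := {x | g * x * g⁻¹ ∈ A}
  one_mem' := by simpa using A.one_mem
  mul_mem' := by
    intro a b ha hb
    have ha' : g * a * g⁻¹ ∈ A := ha
    have hb' : g * b * g⁻¹ ∈ A := hb
    show g * (a * b) * g⁻¹ ∈ A
    have h : g * (a * b) * g⁻¹ = (g * a * g⁻¹) * (g * b * g⁻¹) := by group
    rw [h]; exact mul_mem ha' hb'
  inv_mem' := by
    intro a ha
    have ha' : g * a * g⁻¹ ∈ A := ha
    show g * a⁻¹ * g⁻¹ ∈ A
    have h : g * a⁻¹ * g⁻¹ = (g * a * g⁻¹)⁻¹ := by group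
    rw [h]; exact inv_mem ha' 

/-- A contravariant conjugation functor `Φ` on the subgroup category of `G`, valued in
groups: to each subgroup `A` a group `Φ(A)`, and to each `g` with `gAg⁻¹ ⊆ B` a
group homomorphism `Φ_g^{A,B} : Φ(B) → Φ(A)`, functorially, and depending only on the
morphism `γ_g : A → B` (i.e. on `g` modulo the centraliser of `A`). -/
structure ConjFunctorGrp (G : Type) [Group G] where
  obj : Subgroup G → Type
  [gp : ∀ A, Group (obj A)]
  map : ∀ (g : G) (A B : Subgroup G), (∀ x ∈ A, g * x * g⁻¹ ∈ B) → obj B → obj A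
  map_mul : ∀ (g : G) (A B : Subgroup G) (hg : ∀ x ∈ A, g * x * g⁻¹ ∈ B) (b b' : obj B),
    map g A B hg (b * b') = map g A B hg b * map g A B hg b'
  map_id : ∀ (A : Subgroup G) (h : ∀ x ∈ A, (1 : G) * x * 1⁻¹ ∈ A) (a : obj A),
    map 1 A A h a = a
  map_comp : ∀ (g h : G) (A B C : Subgroup G) (hg : ∀ x ∈ A, g * x * g⁻¹ ∈ B)
    (hh : ∀ x ∈ B, h * x * h⁻¹ ∈ C) (hhg : ∀ x ∈ A, (h * g) * x * (h * g)⁻¹ ∈ C)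
    (c : obj C), map g A B hg (map h B C hh c) = map (h * g) A C hhg c
  map_congr : ∀ (g g' : G) (A B : Subgroup G) (hg : ∀ x ∈ A, g * x * g⁻¹ ∈ B)
    (hg' : ∀ x ∈ A, g' * x * g'⁻¹ ∈ B),
    (∀ x ∈ A, (g⁻¹ * g') * x = x * (g⁻¹ * g')) → ∀ b : obj B, map g A B hg b = map g' A B hg' b

attribute [instance] ConjFunctorGrp.gp

variable {G : Type} [Group G]

/-- The free `R`-module on the symbols `⟨a, A⟩`, `A ≤ G`, `a ∈ Φ(A)`. -/
abbrev FreeBurnside (R : Type) [CommRing R] (F : ConjFunctorGrp G) : Type :=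
  (Σ A : Subgroup G, F.obj A) →₀ R

/-- The submodule of relations `⟨a, A⟩ - ⟨Φ_g^{g⁻¹Ag, A}(a), g⁻¹Ag⟩`. -/
noncomputable def burnsideRels (R : Type) [CommRing R] (F : ConjFunctorGrp G) :
    Submodule R (FreeBurnside R F) :=
  Submodule.span R {x | ∃ (g : G) (A : Subgroup G) (a : F.obj A),
    x = Finsupp.single ⟨A, a⟩ (1 : R) -
      Finsupp.single ⟨conjSub g A, F.map g (conjSub g A) A (fun _ hy => hy) a⟩ (1 : R)}

/-- The generalised Burnside ring `P_R(G)` as an `R`-module. -/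
abbrev BurnsideModule (R : Type) [CommRing R] (F : ConjFunctorGrp G) : Type :=
  FreeBurnside R F ⧸ burnsideRels R F

/-- The generator `⟨a, A⟩` of `P_R(G)`. -/
noncomputable def gen (R : Type) [CommRing R] (F : ConjFunctorGrp G) (A : Subgroup G) (a : F.obj A) :
    BurnsideModule R F :=
  Submodule.Quotient.mk (Finsupp.single ⟨A, a⟩ (1 : R))

/-- The summand `⟨Φ_1^{A∩xBx⁻¹,A}(a) · Φ_{x⁻¹}^{A∩xBx⁻¹,B}(b), A∩xBx⁻¹⟩` of the product
`⟨a,A⟩·⟨b,B⟩` corresponding to the double coset `AxB`. -/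
noncomputable def prodTerm (R : Type) [CommRing R] (F : ConjFunctorGrp G) (A B : Subgroup G)
    (a : F.obj A) (b : F.obj B) (x : G) : BurnsideModule R F :=
  gen R F (A ⊓ conjSub x⁻¹ B)
    (F.map 1 (A ⊓ conjSub x⁻¹ B) A
        (fun y hy => by simpa using (Subgroup.mem_inf.mp hy).1) a *
     F.map x⁻¹ (A ⊓ conjSub x⁻¹ B) B
        (fun y hy => (Subgroup.mem_inf.mp hy).2) b)

/-- `X` is a system of representatives of the double cosets `A\G/B`. -/
def IsDosetRep (A B : Subgroup G) (X : Finset G) : Prop :=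
  ∀ g : G, ∃! x : G, x ∈ X ∧ ∃ a ∈ A, ∃ b ∈ B, g = a * x * b

/-- The bilinear map `mul` satisfies the defining double-coset formula of the
multiplication of the generalised Burnside ring, for every choice of double coset
representatives. -/
def MulFormula (R : Type) [CommRing R] (F : ConjFunctorGrp G)
    (mul : BurnsideModule R F →ₗ[R] BurnsideModule R F →ₗ[R] BurnsideModule R F) : Prop :=
  ∀ (A B : Subgroup G) (a : F.obj A) (b : F.obj B) (X : Finset G), IsDosetRep A B X →
    mul (gen R F A a) (gen R F B b) = ∑ x ∈ X, prodTerm R F A B a b x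

/-- `X` is a system of representatives of those left cosets `gB ∈ G/B` with
`g⁻¹ A g ⊆ B`. -/
def IsFixedCosetRep (A B : Subgroup G) (X : Finset G) : Prop :=
  (∀ x ∈ X, ∀ y ∈ A, x⁻¹ * y * x ∈ B) ∧
  (∀ g : G, (∀ y ∈ A, g⁻¹ * y * g ∈ B) → ∃! x : G, x ∈ X ∧ ∃ b ∈ B, g = x * b)

/-- The `R`-linear map `f` satisfies the defining formula of the mark `f_A^α`:
`f ⟨b, B⟩ = ∑ α (Φ_{g⁻¹}^{A,B}(b))`, the sum over representatives `g` of the cosets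
`gB ∈ G/B` with `g⁻¹ A g ⊆ B`, for every choice of representatives. -/
def MarkFormula (R : Type) [CommRing R] (F : ConjFunctorGrp G) (S : Type) [Ring S]
    [Algebra R S] (A : Subgroup G) (α : F.obj A → Sˣ)
    (f : BurnsideModule R F →ₗ[R] S) : Prop :=
  ∀ (B : Subgroup G) (b : F.obj B) (X : Finset G) (hX : IsFixedCosetRep A B X),
    f (gen R F B b) = ∑ x ∈ X.attach,
      ((α (F.map (x : G)⁻¹ A B
        (fun y hy => by simpa using hX.1 x.1 x.2 y hy) b) : Sˣ) : S)

section Helpers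

lemma mem_conjSub {g : G} {A : Subgroup G} {y : G} :
    y ∈ conjSub g A ↔ g * y * g⁻¹ ∈ A := Iff.rfl

lemma FmapOne (F : ConjFunctorGrp G) (g : G) (A B : Subgroup G)
    (hg : ∀ x ∈ A, g * x * g⁻¹ ∈ B) : F.map g A B hg 1 = 1 := by
  have h := F.map_mul g A B hg 1 1
  rw [one_mul] at h
  exact (left_eq_mul.mp h)

lemma FmapInv (F : ConjFunctorGrp G) (g : G) (A B : Subgroup G)
    (hg : ∀ x ∈ A, g * x * g⁻¹ ∈ B) (b : F.obj B) :
    F.map g A B hg b⁻¹ = (F.map g A B hg b)⁻¹ := by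
  apply eq_inv_of_mul_eq_one_left
  rw [← F.map_mul, inv_mul_cancel, FmapOne]

lemma map_heq (F : ConjFunctorGrp G) (g : G) {S S' B : Subgroup G} (hS : S = S')
    (hg : ∀ y ∈ S, g * y * g⁻¹ ∈ B) (hg' : ∀ y ∈ S', g * y * g⁻¹ ∈ B) (b : F.obj B) :
    HEq (F.map g S B hg b) (F.map g S' B hg' b) := by subst hS; rfl

lemma mul_heq (F : ConjFunctorGrp G) {S S' : Subgroup G} (h : S = S')
    {c d : F.obj S} {c' d' : F.obj S'} (hc : HEq c c') (hd : HEq d d') :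
    HEq (c * d) (c' * d') := by
  subst h; rw [eq_of_heq hc, eq_of_heq hd]

lemma gen_heq (R : Type) [CommRing R] (F : ConjFunctorGrp G) {S S' : Subgroup G}
    (h : S = S') {c : F.obj S} {c' : F.obj S'} (hc : HEq c c') :
    gen R F S c = gen R F S' c' := by
  subst h; rw [eq_of_heq hc]

lemma gen_shift (R : Type) [CommRing R] (F : ConjFunctorGrp G) (g : G) (A : Subgroup G)
    (a : F.obj A) :
    gen R F A a = gen R F (conjSub g A) (F.map g (conjSub g A) A (fun _ hy => hy) a) := by
  apply (Submodule.Quotient.eq _).mpr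
  exact Submodule.subset_span ⟨g, A, a, rfl⟩

lemma ext_gen {R : Type} [CommRing R] {F : ConjFunctorGrp G}
    {M : Type} [AddCommGroup M] [Module R M]
    {f g : BurnsideModule R F →ₗ[R] M}
    (h : ∀ (A : Subgroup G) (a : F.obj A), f (gen R F A a) = g (gen R F A a)) : f = g := by
  have key : f ∘ₗ (burnsideRels R F).mkQ = g ∘ₗ (burnsideRels R F).mkQ := by
    apply Finsupp.lhom_ext
    rintro ⟨A, a⟩ r
    have hs : (Finsupp.single (⟨A, a⟩ : Σ A : Subgroup G, F.obj A) r)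
        = r • Finsupp.single (⟨A, a⟩ : Σ A : Subgroup G, F.obj A) (1 : R) := by
      rw [Finsupp.smul_single, smul_eq_mul, mul_one]
    rw [hs, map_smul, map_smul]
    exact congrArg (r • ·) (h A a)
  refine LinearMap.ext fun p => ?_
  obtain ⟨y, rfl⟩ := Submodule.mkQ_surjective _ p
  exact LinearMap.congr_fun key y

lemma exists_dosetRep [Finite G] (A B : Subgroup G) : ∃ X : Finset G, IsDosetRep A B X := by
  classical
  letI : Fintype G := Fintype.ofFinite G
  letI : DecidableEq G := Classical.decEq _
  let s : Setoid G :=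
    ⟨fun g g' => ∃ a ∈ A, ∃ b ∈ B, g' = a * g * b, by
      constructor
      · intro g; exact ⟨1, A.one_mem, 1, B.one_mem, by group⟩
      · rintro g g' ⟨a, ha, b, hb, h⟩
        exact ⟨a⁻¹, A.inv_mem ha, b⁻¹, B.inv_mem hb, by rw [h]; group⟩
      · rintro g g' g'' ⟨a, ha, b, hb, h⟩ ⟨a', ha', b', hb', h'⟩
        exact ⟨a' * a, A.mul_mem ha' ha, b * b', B.mul_mem hb hb', by rw [h', h]; group⟩⟩
  letI : DecidableRel s.r := fun _ _ => Classical.dec _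
  letI : DecidableEq (Quotient s) := Classical.decEq _
  refine ⟨Finset.univ.image (fun q : Quotient s => q.out), ?_⟩
  intro g
  refine ⟨(Quotient.mk s g).out, ⟨Finset.mem_image_of_mem _ (Finset.mem_univ _), ?_⟩, ?_⟩
  · exact Quotient.mk_out (s := s) g
  · rintro y ⟨hyX, a, ha, b, hb, hg⟩
    have hr : s.r y g := ⟨a, ha, b, hb, hg⟩
    obtain ⟨q, -, rfl⟩ := Finset.mem_image.mp hyX
    have : Quotient.mk s q.out = Quotient.mk s g := Quotient.sound hr
    rw [Quotient.out_eq] at this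
    rw [this]

lemma isDosetRep_inv [DecidableEq G] {A B : Subgroup G} {X : Finset G} (hX : IsDosetRep A B X) :
    IsDosetRep B A (X.image (fun x => x⁻¹)) := by
  intro g
  obtain ⟨x, ⟨hxX, a, ha, b, hb, hg⟩, huniq⟩ := hX g⁻¹
  refine ⟨x⁻¹, ⟨Finset.mem_image_of_mem _ hxX, b⁻¹, B.inv_mem hb, a⁻¹, A.inv_mem ha, ?_⟩, ?_⟩
  · have : g = (g⁻¹)⁻¹ := by group
    rw [this, hg]; group
  · rintro y ⟨hyX, b', hb', a', ha', hg'⟩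
    obtain ⟨z, hzX, rfl⟩ := Finset.mem_image.mp hyX
    have hz : z = x := huniq z ⟨hzX, a'⁻¹, A.inv_mem ha', b'⁻¹, B.inv_mem hb', by
      rw [hg']; group⟩
    rw [hz]

lemma key_term {R : Type} [CommRing R] {F : ConjFunctorGrp G}
    (inv : BurnsideModule R F →ₗ[R] BurnsideModule R F)
    (hinv : ∀ (A : Subgroup G) (a : F.obj A), inv (gen R F A a) = gen R F A a⁻¹)
    (A B : Subgroup G) (a : F.obj A) (b : F.obj B) (x : G) :
    inv (prodTerm R F A B a b x) = prodTerm R F B A b⁻¹ a⁻¹ x⁻¹ := by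
  unfold prodTerm
  rw [hinv, mul_inv_rev]
  erw [← FmapInv, ← FmapInv]
  rw [gen_shift R F x⁻¹ (B ⊓ conjSub x⁻¹⁻¹ A)]
  set T' := B ⊓ conjSub x⁻¹⁻¹ A with hT'
  set U := conjSub x⁻¹ T' with hUdef
  have hU : U = A ⊓ conjSub x⁻¹ B := by
    ext y
    simp only [hUdef, hT', mem_conjSub, Subgroup.mem_inf]
    have k : x⁻¹⁻¹ * (x⁻¹ * y * x⁻¹⁻¹) * x⁻¹⁻¹⁻¹ = y := by group
    rw [k]
    exact and_comm
  have hmem : ∀ y ∈ U, y ∈ A ∧ x⁻¹ * y * x⁻¹⁻¹ ∈ B := by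
    intro y hy
    rw [hU] at hy
    obtain ⟨h1, h2⟩ := Subgroup.mem_inf.mp hy
    exact ⟨h1, h2⟩
  have hb' : ∀ y ∈ U, x⁻¹ * y * x⁻¹⁻¹ ∈ B := fun y hy => (hmem y hy).2
  have ha' : ∀ y ∈ U, 1 * y * 1⁻¹ ∈ A := by
    intro y hy; simpa using (hmem y hy).1
  have h1 : ∀ y ∈ U, (1 * x⁻¹) * y * (1 * x⁻¹)⁻¹ ∈ B := by
    intro y hy
    have e : (1 * x⁻¹) * y * (1 * x⁻¹)⁻¹ = x⁻¹ * y * x⁻¹⁻¹ := by group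
    rw [e]; exact hb' y hy
  have h2 : ∀ y ∈ U, (x⁻¹⁻¹ * x⁻¹) * y * (x⁻¹⁻¹ * x⁻¹)⁻¹ ∈ A := by
    intro y hy
    have e : (x⁻¹⁻¹ * x⁻¹) * y * (x⁻¹⁻¹ * x⁻¹)⁻¹ = y := by group
    rw [e]; exact (hmem y hy).1
  have e2eq : F.map x⁻¹ U T' (fun _ hy => hy)
      ((F.map 1 T' B (fun y hy => by simpa using (Subgroup.mem_inf.mp hy).1) b⁻¹) *
       (F.map x⁻¹⁻¹ T' A (fun y hy => (Subgroup.mem_inf.mp hy).2) a⁻¹))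
      = F.map x⁻¹ U B hb' b⁻¹ * F.map 1 U A ha' a⁻¹ := by
    erw [F.map_mul]
    congr 1
    · exact (F.map_comp x⁻¹ 1 U T' B _ _ h1 b⁻¹).trans
        (F.map_congr (1 * x⁻¹) x⁻¹ U B h1 hb' (by intro y _; group) b⁻¹)
    · exact (F.map_comp x⁻¹ x⁻¹⁻¹ U T' A _ _ h2 a⁻¹).trans
        (F.map_congr (x⁻¹⁻¹ * x⁻¹) 1 U A h2 ha' (by intro y _; group) a⁻¹)
  refine (gen_heq R F hU ?_).symm
  rw [e2eq]
  exact mul_heq F hU (map_heq F x⁻¹ hU _ _ b⁻¹) (map_heq F 1 hU _ _ a⁻¹)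

noncomputable def invMap (R : Type) [CommRing R] (F : ConjFunctorGrp G) :
    BurnsideModule R F →ₗ[R] BurnsideModule R F :=
  Submodule.mapQ _ _
    (Finsupp.lmapDomain R R (fun s : Σ A : Subgroup G, F.obj A => ⟨s.1, s.2⁻¹⟩)) (by
      rw [burnsideRels, Submodule.span_le]
      rintro _ ⟨g, A, a, rfl⟩
      simp only [SetLike.mem_coe, Submodule.mem_comap, map_sub, Finsupp.lmapDomain_apply,
        Finsupp.mapDomain_single]
      apply Submodule.subset_span
      exact ⟨g, A, a⁻¹, by erw [FmapInv]⟩)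

lemma invMap_gen (R : Type) [CommRing R] (F : ConjFunctorGrp G) (A : Subgroup G)
    (a : F.obj A) : invMap R F (gen R F A a) = gen R F A a⁻¹ := by
  unfold invMap gen
  rw [Submodule.mapQ_apply, Finsupp.lmapDomain_apply, Finsupp.mapDomain_single]

end Helpers

/-- if `Φ` is valued in groups, the `R`-linear map on `P_R(G)` determined on
generators by `⟨a, A⟩ ↦ ⟨a⁻¹, A⟩` is well defined (exists and is unique), squares to the
identity, and is an anti-automorphism of the `R`-algebra `P_R(G)` (for its double-coset
multiplication); in particular it is an involution of `P_R(G)`. -/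
theorem burnside_involution (G : Type) [Group G] [Finite G] (R : Type) [CommRing R]
    (F : ConjFunctorGrp G) :
    (∃! inv : BurnsideModule R F →ₗ[R] BurnsideModule R F,
      ∀ (A : Subgroup G) (a : F.obj A), inv (gen R F A a) = gen R F A a⁻¹) ∧
    (∀ inv : BurnsideModule R F →ₗ[R] BurnsideModule R F,
      (∀ (A : Subgroup G) (a : F.obj A), inv (gen R F A a) = gen R F A a⁻¹) →
      (∀ p : BurnsideModule R F, inv (inv p) = p) ∧
      Function.Bijective inv ∧
      (∀ mul : BurnsideModule R F →ₗ[R] BurnsideModule R F →ₗ[R] BurnsideModule R F,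
        MulFormula R F mul →
        ∀ p q : BurnsideModule R F, inv (mul p q) = mul (inv q) (inv p))) := by
  classical
  constructor
  · exact ⟨invMap R F, fun A a => invMap_gen R F A a,
      fun j hj => ext_gen fun A a => by rw [hj, invMap_gen]⟩
  · intro inv hinv
    have hinvol : ∀ p, inv (inv p) = p := by
      have h : inv ∘ₗ inv = LinearMap.id := ext_gen fun A a => by
        simp only [LinearMap.comp_apply, LinearMap.id_apply, hinv, inv_inv]
      intro p
      simpa using LinearMap.congr_fun h p
    refine ⟨hinvol, Function.Involutive.bijective hinvol, ?_⟩
    intro mul hmul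
    have keygen : ∀ (A B : Subgroup G) (a : F.obj A) (b : F.obj B),
        inv (mul (gen R F A a) (gen R F B b)) = mul (gen R F B b⁻¹) (gen R F A a⁻¹) := by
      intro A B a b
      obtain ⟨X, hX⟩ := exists_dosetRep A B
      rw [hmul A B a b X hX, map_sum,
        hmul B A b⁻¹ a⁻¹ (X.image (fun x => x⁻¹)) (isDosetRep_inv hX),
        Finset.sum_image (fun x _ y _ h => inv_injective h)]
      exact Finset.sum_congr rfl fun x _ => key_term inv hinv A B a b x
    have stepA : ∀ (A : Subgroup G) (a : F.obj A) (q : BurnsideModule R F),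
        inv (mul (gen R F A a) q) = mul (inv q) (gen R F A a⁻¹) := by
      intro A a
      have h : inv ∘ₗ (mul (gen R F A a)) = (mul.flip (gen R F A a⁻¹)) ∘ₗ inv :=
        ext_gen fun B b => by
          simp only [LinearMap.comp_apply, LinearMap.flip_apply, hinv]
          exact keygen A B a b
      intro q
      simpa using LinearMap.congr_fun h q
    intro p q
    have h : inv ∘ₗ (mul.flip q) = (mul (inv q)) ∘ₗ inv :=
      ext_gen fun A a => by
        simp only [LinearMap.comp_apply, LinearMap.flip_apply, hinv]
        exact stepA A a q
    simpa using LinearMap.congr_fun h p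
end

section
/- Let 𝕂 be a field of characteristic different from 2, G a finite group, and H ⊆ K ⊆ G subgroups such that the index [K : H] is odd and both H²(K, 𝕂ˣ) and H²(H, 𝕂ˣ) have order 2. Let τ be the nontrivial class of H²(K, 𝕂ˣ) and let α : H²(H, 𝕂ˣ) → {±1} be the nontrivial character (α of the trivial class is 1, α of the nontrivial class is −1). Then Σ α((c_g)*(τ)) = − |{ gK ∈ G/K : g⁻¹Hg ⊆ K }|, where the sum runs over those cosets gK ∈ G/K with g⁻¹Hg ⊆ K, (c_g)* denotes the pullback along the injective homomorphism H → K, h ↦ g⁻¹hg, and the sum is independent of the chosen coset representatives. (In the language of the extended Burnside ring this reads f'_H(⟨K'⟩) = − f_H(⟨K⟩).) -/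
/-- A 2-cocycle on `K` with values in the trivial `K`-module `M`. -/
def IsTwoCocycle {K M : Type} [Group K] [CommGroup M] (θ : K → K → M) : Prop :=
  ∀ g h k : K, θ g h * θ (g * h) k = θ h k * θ g (h * k)

/-- A 2-coboundary on `K` with values in the trivial `K`-module `M`. -/
def IsTwoCoboundary {K M : Type} [Group K] [CommGroup M] (θ : K → K → M) : Prop :=
  ∃ f : K → M, ∀ g h : K, θ g h = f g * f h * (f (g * h))⁻¹

/-- Two cocycles define the same cohomology class. -/
def Cohomologous {K M : Type} [Group K] [CommGroup M] (θ η : K → K → M) : Prop :=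
  IsTwoCoboundary (fun g h => θ g h * (η g h)⁻¹)

/-- Restriction (pullback) of a 2-cocycle along a map `φ : H → K`. -/
def cocyclePullback {H K M : Type} (φ : H → K) (θ : K → K → M) : H → H → M :=
  fun a b => θ (φ a) (φ b)

/-- `H²(K, M)` has order 2: there is a non-coboundary cocycle `τ` and every
cocycle is cohomologous to `1` or to `τ`. -/
def H2OrderTwo (K M : Type) [Group K] [CommGroup M] : Prop :=
  ∃ τ : K → K → M, IsTwoCocycle τ ∧ ¬ IsTwoCoboundary τ ∧
    ∀ θ : K → K → M, IsTwoCocycle θ → (IsTwoCoboundary θ ∨ Cohomologous θ τ)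

section Aux

variable {K M : Type} [Group K] [CommGroup M]

lemma cob_mul {θ η : K → K → M} (h1 : IsTwoCoboundary θ) (h2 : IsTwoCoboundary η) :
    IsTwoCoboundary (fun g h => θ g h * η g h) := by
  obtain ⟨f, hf⟩ := h1
  obtain ⟨f', hf'⟩ := h2
  refine ⟨fun g => f g * f' g, fun g h => ?_⟩
  simp only [hf, hf', mul_inv]
  ac_rfl

lemma cob_inv {θ : K → K → M} (h1 : IsTwoCoboundary θ) :
    IsTwoCoboundary (fun g h => (θ g h)⁻¹) := by
  obtain ⟨f, hf⟩ := h1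
  refine ⟨fun g => (f g)⁻¹, fun g h => ?_⟩
  simp only [hf, mul_inv, inv_inv]

lemma cob_pow {θ : K → K → M} (h1 : IsTwoCoboundary θ) (n : ℕ) :
    IsTwoCoboundary (fun g h => (θ g h) ^ n) := by
  obtain ⟨f, hf⟩ := h1
  refine ⟨fun g => (f g) ^ n, fun g h => ?_⟩
  simp only [hf, mul_pow, inv_pow]

lemma cocycle_sq {τ : K → K → M} (hτ : IsTwoCocycle τ) :
    IsTwoCocycle (fun g h => τ g h * τ g h) := by
  intro g h k
  have h1 := hτ g h k
  calc τ g h * τ g h * (τ (g * h) k * τ (g * h) k)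
      = (τ g h * τ (g * h) k) * (τ g h * τ (g * h) k) := by ac_rfl
    _ = (τ h k * τ g (h * k)) * (τ h k * τ g (h * k)) := by rw [h1]
    _ = τ h k * τ h k * (τ g (h * k) * τ g (h * k)) := by ac_rfl

/-- The key 2-cocycle identity underlying corestriction (transfer):
the "conjugated-translated" value `τ (t''⁻¹ g t') (t'⁻¹ h t)` differs from `τ g h`
by an explicit coboundary-like correction. -/
lemma key_identity {τ : K → K → M} (hτ : IsTwoCocycle τ) (g h t t' t'' : K) :
    τ (t''⁻¹ * (g * t')) (t'⁻¹ * (h * t))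
      = τ g h * (τ g t' * (τ t'' (t''⁻¹ * (g * t')))⁻¹)⁻¹
          * (τ h t * (τ t' (t'⁻¹ * (h * t)))⁻¹)⁻¹
          * (τ (g * h) t * (τ t'' (t''⁻¹ * (g * h * t)))⁻¹) := by
  have h1 := hτ t'' (t''⁻¹ * (g * t')) (t'⁻¹ * (h * t))
  have h2 := hτ g t' (t'⁻¹ * (h * t))
  have h3 := hτ g h t
  simp only [mul_assoc, mul_inv_cancel_left, inv_mul_cancel_left] at h1 h2 h3 ⊢
  set P := τ g h
  set Qt := τ (g * h) t
  set Rt := τ h t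
  set S := τ g (h * t)
  set D := τ g t'
  set E := τ (g * t') (t'⁻¹ * (h * t))
  set Ft := τ t' (t'⁻¹ * (h * t))
  set a := τ t'' (t''⁻¹ * (g * t'))
  set b := τ (t''⁻¹ * (g * t')) (t'⁻¹ * (h * t))
  set c := τ t'' (t''⁻¹ * (g * (h * t)))
  have hb : b = a * E * c⁻¹ := eq_mul_inv_iff_mul_eq.mpr h1.symm
  have hS : S = Rt⁻¹ * (P * Qt) := eq_inv_mul_iff_mul_eq.mpr h3.symm
  have hE : E = D⁻¹ * (Ft * S) := eq_inv_mul_iff_mul_eq.mpr h2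
  rw [hb, hE, hS]
  simp only [mul_inv, inv_inv]
  ac_rfl

end Aux

/-- Corestriction (transfer) argument: if the restriction of a cocycle `τ` on `K` along an
injective homomorphism `φ : H →* K` is a coboundary, then `τ ^ [K : φ.range]` is a
coboundary. -/
lemma pow_index_cob {H K : Type} [Group H] [Group K] [Finite K] {M : Type} [CommGroup M]
    (φ : H →* K) (hinj : Function.Injective φ)
    {τ : K → K → M} (hτ : IsTwoCocycle τ)
    (hcb : IsTwoCoboundary (cocyclePullback (⇑φ) τ)) :
    IsTwoCoboundary (fun g h => (τ g h) ^ φ.range.index) := by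
  classical
  obtain ⟨f, hf⟩ := hcb
  letI : Fintype (K ⧸ φ.range) := Fintype.ofFinite _
  set Q := K ⧸ φ.range with hQ
  set w : K → Q → K := fun g q => ((g • q).out)⁻¹ * (g * q.out) with hwdef
  have hw : ∀ (g : K) (q : Q), w g q ∈ φ.range := by
    intro g q
    have h1 : (QuotientGroup.mk ((g • q).out) : Q) = QuotientGroup.mk (g * q.out) := by
      rw [QuotientGroup.out_eq']
      conv_lhs => rw [← QuotientGroup.out_eq' q]
      rfl
    simpa [hwdef, mul_assoc] using QuotientGroup.eq.mp h1
  set v : K → Q → H := fun g q => Function.invFun (⇑φ) (w g q) with hvdef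
  have hv : ∀ (g : K) (q : Q), φ (v g q) = w g q := by
    intro g q
    exact Function.invFun_eq (by obtain ⟨a, ha⟩ := hw g q; exact ⟨a, ha⟩)
  have hvm : ∀ (g h : K) (q : Q), v (g * h) q = v g (h • q) * v h q := by
    intro g h q
    apply hinj
    rw [map_mul, hv, hv, hv, hwdef]
    simp only [mul_smul]
    group
  set ψ : Q → K → M := fun q g => τ g q.out * (τ (g • q).out (w g q))⁻¹ with hψdef
  have hindex : φ.range.index = Fintype.card Q := by
    rw [Subgroup.index, Nat.card_eq_fintype_card]
  have hgen : ∀ a b c p q r x : M, a * b * c⁻¹ = x * (p⁻¹ * (q⁻¹ * r)) →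
      x = (a * p) * (b * q) * (c * r)⁻¹ := by
    intro a b c p q r x hx
    have : x = a * b * c⁻¹ * (p⁻¹ * (q⁻¹ * r))⁻¹ := by
      rw [hx]; group
    rw [this]
    simp only [mul_inv, inv_inv]
    ac_rfl
  refine ⟨fun g => (∏ q : Q, f (v g q)) * ∏ q : Q, ψ q g, fun g h => ?_⟩
  beta_reduce
  rw [hindex]
  have hA : (∏ q : Q, τ (w g (h • q)) (w h q))
      = (∏ q : Q, f (v g q)) * (∏ q : Q, f (v h q)) * (∏ q : Q, f (v (g * h) q))⁻¹ := by
    have hterm : ∀ q : Q, τ (w g (h • q)) (w h q)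
        = f (v g (h • q)) * f (v h q) * (f (v (g * h) q))⁻¹ := by
      intro q
      rw [← hv, ← hv]
      have := hf (v g (h • q)) (v h q)
      rw [← hvm] at this
      exact this
    rw [Finset.prod_congr rfl (fun q _ => hterm q)]
    rw [Finset.prod_mul_distrib, Finset.prod_mul_distrib, ← Finset.prod_inv_distrib]
    have hre : (∏ q : Q, f (v g (h • q))) = ∏ q : Q, f (v g q) :=
      Equiv.prod_comp (MulAction.toPerm h) (fun q => f (v g q))
    rw [hre]
  have hB : (∏ q : Q, τ (w g (h • q)) (w h q))
      = (τ g h) ^ (Fintype.card Q) *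
        ((∏ q : Q, ψ q g)⁻¹ * ((∏ q : Q, ψ q h)⁻¹ * ∏ q : Q, ψ q (g * h))) := by
    have hterm : ∀ q : Q, τ (w g (h • q)) (w h q)
        = τ g h * (ψ (h • q) g)⁻¹ * (ψ q h)⁻¹ * ψ q (g * h) := by
      intro q
      have hk := key_identity hτ g h q.out (h • q).out ((g * h) • q).out
      simp only [hwdef, hψdef, mul_smul]
      simp only [mul_smul] at hk
      convert hk using 3
    rw [Finset.prod_congr rfl (fun q _ => hterm q)]
    rw [Finset.prod_mul_distrib, Finset.prod_mul_distrib, Finset.prod_mul_distrib,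
      Finset.prod_const, Finset.card_univ]
    have hre : (∏ q : Q, (ψ (h • q) g)⁻¹) = ∏ q : Q, (ψ q g)⁻¹ :=
      Equiv.prod_comp (MulAction.toPerm h) (fun q => (ψ q g)⁻¹)
    rw [hre]
    simp only [Finset.prod_inv_distrib]
    ac_rfl
  exact hgen _ _ _ _ _ _ _ (hA.symm.trans hB)

/-- If `H²(K,M)` has order two, the square of any non-coboundary cocycle is a coboundary. -/
lemma sq_cob {K M : Type} [Group K] [CommGroup M] (hK2 : H2OrderTwo K M)
    {τ : K → K → M} (hτ : IsTwoCocycle τ) (hn : ¬ IsTwoCoboundary τ) :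
    IsTwoCoboundary (fun g h => τ g h * τ g h) := by
  obtain ⟨τ₀, hc0, hn0, hall⟩ := hK2
  have hδ : IsTwoCoboundary (fun g h => τ g h * (τ₀ g h)⁻¹) :=
    (hall τ hτ).resolve_left hn
  rcases hall _ (cocycle_sq hτ) with h | h
  · exact h
  · exfalso
    apply hn
    have hmul := cob_mul h (cob_inv hδ)
    have heq : τ = fun g h =>
        (τ g h * τ g h * (τ₀ g h)⁻¹) * (τ g h * (τ₀ g h)⁻¹)⁻¹ := by
      funext g h
      group
    rw [heq]
    exact hmul

/-- Main abstract lemma: if `φ : H →* K` is injective of odd index, `τ` is a cocycle on `K`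
whose square is a coboundary but which is not itself a coboundary, then the pullback of `τ`
along `φ` is not a coboundary. -/
lemma pullback_not_cob {H K : Type} [Group H] [Group K] [Finite K] {M : Type} [CommGroup M]
    (φ : H →* K) (hinj : Function.Injective φ) (hodd : Odd φ.range.index)
    {τ : K → K → M} (hτ : IsTwoCocycle τ)
    (hsq : IsTwoCoboundary (fun g h => τ g h * τ g h))
    (hn : ¬ IsTwoCoboundary τ) :
    ¬ IsTwoCoboundary (cocyclePullback (⇑φ) τ) := by
  intro hcb
  apply hn
  have hpow := pow_index_cob φ hinj hτ hcb
  obtain ⟨m, hm⟩ := hodd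
  have h2m : IsTwoCoboundary (fun g h => (τ g h) ^ (2 * m)) := by
    have := cob_pow hsq m
    have heq : (fun g h => (τ g h * τ g h) ^ m) = fun g h => (τ g h) ^ (2 * m) := by
      funext g h
      rw [← sq, ← pow_mul]
    rwa [heq] at this
  have hmul := cob_mul hpow (cob_inv h2m)
  have heq : τ = fun g h =>
      (τ g h) ^ φ.range.index * ((τ g h) ^ (2 * m))⁻¹ := by
    funext g h
    rw [hm, pow_succ]
    group
  rw [heq]
  exact hmul

open scoped Classical in
/-- for the nontrivial class `τ` of `H²(K,𝕂ˣ)` and the nontrivial character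
`α` of `H²(H,𝕂ˣ)` (value `1` on the trivial class, i.e. on coboundaries, and `-1` on the
nontrivial class), summing `α` of the pullbacks of `τ` along `h ↦ x⁻¹hx` over a set `X` of
representatives of the cosets `gK` with `g⁻¹Hg ⊆ K` gives `-|X|`, i.e.
`f'_H(⟨K'⟩) = - f_H(⟨K⟩)`; the result is independent of the chosen representatives since
`X` is an arbitrary system of representatives. -/
theorem mark_of_nontrivial_class (𝕂 : Type) [Field 𝕂] (hchar : ringChar 𝕂 ≠ 2)
    (G : Type) [Group G] [Finite G] (H K : Subgroup G) (hHK : H ≤ K)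
    (hodd : Odd (H.subgroupOf K).index)
    (hK2 : H2OrderTwo ↥K 𝕂ˣ) (hH2 : H2OrderTwo ↥H 𝕂ˣ)
    (τ : ↥K → ↥K → 𝕂ˣ) (hτc : IsTwoCocycle τ) (hτn : ¬ IsTwoCoboundary τ)
    (X : Finset G)
    (hX1 : ∀ x ∈ X, ∀ y ∈ H, x⁻¹ * y * x ∈ K)
    (hX2 : ∀ g : G, (∀ y ∈ H, g⁻¹ * y * g ∈ K) →
      ∃! x : G, x ∈ X ∧ ∃ k ∈ K, g = x * k) :
    (∑ x ∈ X.attach,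
      (if IsTwoCoboundary (cocyclePullback
          (fun y : ↥H => (⟨(x : G)⁻¹ * y * x, hX1 x.1 x.2 y y.2⟩ : ↥K)) τ)
        then (1 : ℤ) else -1)) = -(X.card : ℤ) := by
  have hsq : IsTwoCoboundary (fun g h => τ g h * τ g h) := sq_cob hK2 hτc hτn
  have hterm : ∀ x ∈ X.attach,
      (if IsTwoCoboundary (cocyclePullback
          (fun y : ↥H => (⟨(x : G)⁻¹ * y * x, hX1 x.1 x.2 y y.2⟩ : ↥K)) τ)
        then (1 : ℤ) else -1) = -1 := by
    intro x _
    rw [if_neg]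
    set φ : ↥H →* ↥K :=
      { toFun := fun y : ↥H => (⟨(x : G)⁻¹ * y * x, hX1 x.1 x.2 y y.2⟩ : ↥K)
        map_one' := by ext; simp
        map_mul' := fun a b => by ext; simp [Subtype.ext_iff]; group } with hφdef
    have hinj : Function.Injective φ := by
      intro a b hab
      have := congrArg (Subtype.val) hab
      simp only [hφdef, MonoidHom.coe_mk, OneHom.coe_mk] at this
      ext
      exact mul_left_cancel (mul_right_cancel this)
    have hoddr : Odd φ.range.index := by
      have hcard : Nat.card φ.range = Nat.card (H.subgroupOf K) := by
        rw [Nat.card_congr (MonoidHom.ofInjective hinj).toEquiv.symm,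
          Nat.card_congr (Subgroup.subgroupOfEquivOfLe hHK).toEquiv]
      have h1 := Subgroup.card_mul_index φ.range
      have h2 := Subgroup.card_mul_index (H.subgroupOf K)
      rw [hcard] at h1
      have hpos : 0 < Nat.card (H.subgroupOf K) := Nat.card_pos
      have : φ.range.index = (H.subgroupOf K).index :=
        Nat.eq_of_mul_eq_mul_left hpos (h1.trans h2.symm)
      rwa [this]
    exact pullback_not_cob φ hinj hoddr hτc hsq hτn
  rw [Finset.sum_congr rfl hterm, Finset.sum_const, Finset.card_attach]
  simp
end
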